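/- Let F be a field of characteristic different from 2 and m, n ≥ 1. Let M_{m,n}(F)^(+) denote the vector space M_{m+n}(F) of (m+n)×(m+n) matrices with the super-symmetrized product ∘ defined as follows: decompose each matrix x = x₀ + x₁ where x₀ is its block-diagonal part (an m×m block and an n×n block on the diagonal) and x₁ its block-off-diagonal part; then ∘ is the bilinear product with x₀∘y₀ = (1/2)(x₀y₀ + y₀x₀), x₀∘y₁ = (1/2)(x₀y₁ + y₁x₀), x₁∘y₀ = (1/2)(x₁y₀ + y₀x₁), and x₁∘y₁ = (1/2)(x₁y₁ − y₁x₁), products on the right being ordinary matrix products. Then every 1/2-derivation φ of (M_{m+n}(F), ∘) is of the form φ(x) = α·x for some α ∈ F. -/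

import Mathlib

/-- The even (block-diagonal) part of a matrix indexed by `α ⊕ β`:
the entries in the two diagonal blocks are kept, the off-diagonal blocks
are replaced by `0`. -/
def blockDiagPart {F : Type*} [Field F] {α β : Type*}
    (x : Matrix (α ⊕ β) (α ⊕ β) F) : Matrix (α ⊕ β) (α ⊕ β) F :=
  Matrix.of fun i j => if i.isLeft = j.isLeft then x i j else 0

/-- The super-symmetrized product `∘` on block matrices: writing
`x = x₀ + x₁` with `x₀` the block-diagonal part and `x₁` the
block-off-diagonal part, `x ∘ y` is bilinear with
`x₀∘y₀ = (1/2)(x₀y₀ + y₀x₀)`, `x₀∘y₁ = (1/2)(x₀y₁ + y₁x₀)`,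
`x₁∘y₀ = (1/2)(x₁y₀ + y₀x₁)` and `x₁∘y₁ = (1/2)(x₁y₁ − y₁x₁)`. -/
def superMul {F : Type*} [Field F] {α β : Type*} [Fintype α] [Fintype β]
    (x y : Matrix (α ⊕ β) (α ⊕ β) F) : Matrix (α ⊕ β) (α ⊕ β) F :=
  (1 / 2 : F) •
    (blockDiagPart x * blockDiagPart y + blockDiagPart y * blockDiagPart x
      + blockDiagPart x * (y - blockDiagPart y) + (y - blockDiagPart y) * blockDiagPart x
      + (x - blockDiagPart x) * blockDiagPart y + blockDiagPart y * (x - blockDiagPart x)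
      + (x - blockDiagPart x) * (y - blockDiagPart y)
      - (y - blockDiagPart y) * (x - blockDiagPart x))

namespace HalfDeriv

set_option linter.unusedSectionVars false

variable {F : Type*} [Field F] {α β : Type*} [Fintype α] [Fintype β]

lemma bdp_apply (x : Matrix (α ⊕ β) (α ⊕ β) F) (p q : α ⊕ β) :
    blockDiagPart x p q = if p.isLeft = q.isLeft then x p q else 0 := rfl

lemma odd_entries {x : Matrix (α ⊕ β) (α ⊕ β) F} (hx : blockDiagPart x = 0)
    {p q : α ⊕ β} (h : p.isLeft = q.isLeft) : x p q = 0 := by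
  have := congrFun (congrFun hx p) q
  simpa [bdp_apply, h] using this

lemma even_entries {c : Matrix (α ⊕ β) (α ⊕ β) F} (hc : blockDiagPart c = c)
    {p q : α ⊕ β} (h : ¬ p.isLeft = q.isLeft) : c p q = 0 := by
  have := congrFun (congrFun hc p) q
  rw [bdp_apply, if_neg h] at this
  exact this.symm

lemma bdp_eq_zero_of_entries {x : Matrix (α ⊕ β) (α ⊕ β) F}
    (h : ∀ p q : α ⊕ β, p.isLeft = q.isLeft → x p q = 0) : blockDiagPart x = 0 := by
  ext p q
  rw [bdp_apply]
  split_ifs with h'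
  · exact h p q h'
  · rfl

lemma even_mul_odd {c x : Matrix (α ⊕ β) (α ⊕ β) F} (hc : blockDiagPart c = c)
    (hx : blockDiagPart x = 0) : blockDiagPart (c * x) = 0 := by
  refine bdp_eq_zero_of_entries fun p q h => ?_
  rw [Matrix.mul_apply]
  refine Finset.sum_eq_zero fun r _ => ?_
  by_cases hr : p.isLeft = r.isLeft
  · rw [odd_entries hx (hr.symm.trans h), mul_zero]
  · rw [even_entries hc hr, zero_mul]

lemma odd_mul_even {c x : Matrix (α ⊕ β) (α ⊕ β) F} (hc : blockDiagPart c = c)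
    (hx : blockDiagPart x = 0) : blockDiagPart (x * c) = 0 := by
  refine bdp_eq_zero_of_entries fun p q h => ?_
  rw [Matrix.mul_apply]
  refine Finset.sum_eq_zero fun r _ => ?_
  by_cases hr : p.isLeft = r.isLeft
  · rw [odd_entries hx hr, zero_mul]
  · rw [even_entries hc (fun hh => hr (h.trans hh.symm)), mul_zero]

lemma bdp_add (x y : Matrix (α ⊕ β) (α ⊕ β) F) :
    blockDiagPart (x + y) = blockDiagPart x + blockDiagPart y := by
  ext p q
  simp only [bdp_apply, Matrix.add_apply]
  split_ifs <;> simp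

lemma bdp_smul (r : F) (x : Matrix (α ⊕ β) (α ⊕ β) F) :
    blockDiagPart (r • x) = r • blockDiagPart x := by
  ext p q
  simp only [bdp_apply, Matrix.smul_apply]
  split_ifs <;> simp

lemma bdp_one [DecidableEq α] [DecidableEq β] :
    blockDiagPart (1 : Matrix (α ⊕ β) (α ⊕ β) F) = 1 := by
  ext p q
  rw [bdp_apply]
  by_cases h : p = q
  · subst h; simp
  · rw [Matrix.one_apply_ne h]; split_ifs <;> rfl

lemma bdp_std_odd [DecidableEq α] [DecidableEq β] {a b : α ⊕ β}
    (h : ¬ a.isLeft = b.isLeft) :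
    blockDiagPart (Matrix.single a b (1:F)) = 0 := by
  refine bdp_eq_zero_of_entries fun p q hpq => ?_
  apply Matrix.single_apply_of_ne
  rintro ⟨rfl, rfl⟩
  exact h hpq

lemma superMul_even_left {x : Matrix (α ⊕ β) (α ⊕ β) F} (hx : blockDiagPart x = x)
    (y : Matrix (α ⊕ β) (α ⊕ β) F) :
    superMul x y = (1/2 : F) • (x * y + y * x) := by
  unfold superMul; rw [hx]; congr 1; noncomm_ring

lemma superMul_even_right {y : Matrix (α ⊕ β) (α ⊕ β) F} (hy : blockDiagPart y = y)
    (x : Matrix (α ⊕ β) (α ⊕ β) F) :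
    superMul x y = (1/2 : F) • (x * y + y * x) := by
  unfold superMul; rw [hy]; congr 1; noncomm_ring

lemma superMul_odd_odd {x y : Matrix (α ⊕ β) (α ⊕ β) F} (hx : blockDiagPart x = 0)
    (hy : blockDiagPart y = 0) :
    superMul x y = (1/2 : F) • (x * y - y * x) := by
  unfold superMul; rw [hx, hy]; congr 1; noncomm_ring

lemma two_smul_superMul (hchar : (2:F) ≠ 0) (x y : Matrix (α ⊕ β) (α ⊕ β) F) :
    (2:F) • superMul x y =
    blockDiagPart x * blockDiagPart y + blockDiagPart y * blockDiagPart x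
      + blockDiagPart x * (y - blockDiagPart y) + (y - blockDiagPart y) * blockDiagPart x
      + (x - blockDiagPart x) * blockDiagPart y + blockDiagPart y * (x - blockDiagPart x)
      + (x - blockDiagPart x) * (y - blockDiagPart y)
      - (y - blockDiagPart y) * (x - blockDiagPart x) := by
  rw [superMul, smul_smul, mul_one_div, div_self hchar, one_smul]

lemma mul_std_apply {ι : Type*} [Fintype ι] [DecidableEq ι] (M : Matrix ι ι F) (a b p q : ι) :
    (M * Matrix.single a b (1:F)) p q = if q = b then M p a else 0 := by
  split_ifs with h
  · subst h; simp
  · exact Matrix.mul_single_apply_of_ne (c := (1:F)) (i := a) (j := b) (a := p) (b := q) h M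

lemma std_mul_apply {ι : Type*} [Fintype ι] [DecidableEq ι] (M : Matrix ι ι F) (a b p q : ι) :
    (Matrix.single a b (1:F) * M) p q = if p = a then M b q else 0 := by
  split_ifs with h
  · subst h; simp
  · exact Matrix.single_mul_apply_of_ne (c := (1:F)) (i := a) (j := b) (a := p) (b := q) h M

lemma cancel_pow_two (hchar : (2:F) ≠ 0) {k : ℕ} {u v : F}
    (h : (2:F)^k * (u - v) = 0) : u = v :=
  sub_eq_zero.mp ((mul_eq_zero.mp h).resolve_left (pow_ne_zero k hchar))

end HalfDeriv

open HalfDeriv in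
/-- **1/2-derivations of the Jordan superalgebra `M_{m,n}(F)⁺`.**
Let `F` be a field of characteristic not `2` and `m, n ≥ 1`.  Every
`1/2`-derivation `φ` of `M_{m,n}(F)⁺`, i.e. the space of
`(m+n) × (m+n)` matrices with the super-symmetrized product `∘`,
is of the form `φ x = α • x` for some `α ∈ F`. -/
theorem half_derivation_of_Mmn_plus
    {F : Type*} [Field F] (hchar : (2 : F) ≠ 0)
    (m n : ℕ) (hm : 1 ≤ m) (hn : 1 ≤ n)
    (φ : Matrix (Fin m ⊕ Fin n) (Fin m ⊕ Fin n) F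
      →ₗ[F] Matrix (Fin m ⊕ Fin n) (Fin m ⊕ Fin n) F)
    (hφ : ∀ x y : Matrix (Fin m ⊕ Fin n) (Fin m ⊕ Fin n) F,
      φ (superMul x y) = (1 / 2 : F) • (superMul (φ x) y + superMul x (φ y))) :
    ∃ α : F, ∀ x : Matrix (Fin m ⊕ Fin n) (Fin m ⊕ Fin n) F, φ x = α • x := by

  classical
  set c := φ 1 with hcdef
  -- `superMul 1 x = x = superMul x 1`
  have hone : ∀ x : Matrix (Fin m ⊕ Fin n) (Fin m ⊕ Fin n) F, superMul 1 x = x := by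
    intro x
    rw [superMul_even_left bdp_one, Matrix.one_mul, Matrix.mul_one, ← two_smul F,
      smul_smul, one_div_mul_cancel hchar, one_smul]
  have hone' : ∀ x : Matrix (Fin m ⊕ Fin n) (Fin m ⊕ Fin n) F, superMul x 1 = x := by
    intro x
    rw [superMul_even_right bdp_one, Matrix.one_mul, Matrix.mul_one, ← two_smul F,
      smul_smul, one_div_mul_cancel hchar, one_smul]
  -- φ x = superMul x c = superMul c x
  have hsc : ∀ x, φ x = superMul x c := by
    intro x
    have h := hφ x 1
    rw [hone' x, hone' (φ x)] at h
    have h2 := congrArg (fun z => (2:F) • z) h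
    simp only [smul_smul, mul_one_div, div_self hchar, one_smul, two_smul] at h2
    exact add_left_cancel h2
  have hcs : ∀ x, φ x = superMul c x := by
    intro x
    have h := hφ 1 x
    rw [hone x, hone (φ x)] at h
    have h2 := congrArg (fun z => (2:F) • z) h
    simp only [smul_smul, mul_one_div, div_self hchar, one_smul, two_smul] at h2
    exact add_right_cancel h2
  -- c is block diagonal
  have hoff : ∀ p q : Fin m ⊕ Fin n, ¬ p.isLeft = q.isLeft → c p q = 0 := by
    intro p q hpq
    have hne : p ≠ q := fun e => hpq (by rw [e])
    set x := Matrix.single q p (1:F) with hxdef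
    have hx : blockDiagPart x = 0 := bdp_std_odd (fun h => hpq h.symm)
    have h : superMul c x = superMul x c := (hcs x).symm.trans (hsc x)
    have h2 := congrArg (fun z => (2:F) • z) h
    simp only [two_smul_superMul hchar, hx, Matrix.mul_zero, Matrix.zero_mul, sub_zero,
      add_zero, zero_add] at h2
    have he := Matrix.ext_iff.mpr h2 p p
    simp only [hxdef, Matrix.add_apply, Matrix.sub_apply, mul_std_apply, std_mul_apply,
      bdp_apply] at he
    simp only [if_pos rfl, if_neg hne, if_neg hpq, if_true, sub_zero, add_zero, zero_add] at he
    refine cancel_pow_two hchar (k := 1) ?_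
    linear_combination he
  have hce : blockDiagPart c = c := by
    ext p q
    rw [bdp_apply]
    split_ifs with h
    · rfl
    · exact (hoff p q h).symm
  have hT : ∀ x, φ x = (1/2 : F) • (c * x + x * c) :=
    fun x => (hcs x).trans (superMul_even_left hce x)
  -- the key relation, for odd x y, evaluated at specific basis matrices
  have hkey : ∀ a b : Fin m ⊕ Fin n, ¬ a.isLeft = b.isLeft → c a a = c b b := by
    intro a b hab
    have hne : a ≠ b := fun e => hab (by rw [e])
    have hx : blockDiagPart (Matrix.single a b (1:F)) = 0 := bdp_std_odd hab
    have hy : blockDiagPart (Matrix.single b a (1:F)) = 0 :=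
      bdp_std_odd (fun h => hab h.symm)
    have h := hφ (Matrix.single a b (1:F)) (Matrix.single b a (1:F))
    rw [superMul_odd_odd hx hy] at h
    simp only [hT] at h
    have hx' : blockDiagPart ((1/2:F) • (c * Matrix.single a b (1:F)
        + Matrix.single a b (1:F) * c)) = 0 := by
      rw [bdp_smul, bdp_add, even_mul_odd hce hx, odd_mul_even hce hx, add_zero, smul_zero]
    have hy' : blockDiagPart ((1/2:F) • (c * Matrix.single b a (1:F)
        + Matrix.single b a (1:F) * c)) = 0 := by
      rw [bdp_smul, bdp_add, even_mul_odd hce hy, odd_mul_even hce hy, add_zero, smul_zero]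
    rw [superMul_odd_odd hx' hy, superMul_odd_odd hx hy'] at h
    -- distribute everything
    simp only [Matrix.smul_mul, Matrix.mul_smul, smul_add, smul_sub, smul_smul,
      mul_sub, sub_mul, mul_add, add_mul, Matrix.mul_assoc,
      Matrix.single_mul_single_same, mul_one] at h
    have he := Matrix.ext_iff.mpr h a a
    simp only [Matrix.smul_apply, Matrix.add_apply, Matrix.sub_apply,
      mul_std_apply, std_mul_apply, smul_eq_mul] at he
    simp only [if_pos rfl, if_neg hne, if_neg (fun e => hne e.symm : ¬ b = a), if_true,
      mul_zero, sub_zero, add_zero, zero_add] at he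
    field_simp at he
    refine cancel_pow_two hchar (k := 3) ?_
    linear_combination 4 * he
  -- off-diagonal entries within a block vanish
  have hdiag : ∀ (a e b : Fin m ⊕ Fin n), a ≠ e → a.isLeft = e.isLeft → ¬ a.isLeft = b.isLeft →
      c e a = 0 := by
    intro a e b hae hside hab
    have hea : e ≠ a := fun h => hae h.symm
    have hbe : ¬ b.isLeft = e.isLeft := fun h => hab (hside.trans h.symm)
    have hba : b ≠ a := fun h => hab (by rw [h])
    have hbe' : b ≠ e := fun h => hbe (by rw [h])
    have hab' : a ≠ b := fun h => hab (by rw [h])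
    have heb : e ≠ b := fun h => hbe (by rw [h])
    have hx : blockDiagPart (Matrix.single a b (1:F)) = 0 := bdp_std_odd hab
    have hy : blockDiagPart (Matrix.single b e (1:F)) = 0 := bdp_std_odd hbe
    have h := hφ (Matrix.single a b (1:F)) (Matrix.single b e (1:F))
    rw [superMul_odd_odd hx hy] at h
    simp only [hT] at h
    have hx' : blockDiagPart ((1/2:F) • (c * Matrix.single a b (1:F)
        + Matrix.single a b (1:F) * c)) = 0 := by
      rw [bdp_smul, bdp_add, even_mul_odd hce hx, odd_mul_even hce hx, add_zero, smul_zero]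
    have hy' : blockDiagPart ((1/2:F) • (c * Matrix.single b e (1:F)
        + Matrix.single b e (1:F) * c)) = 0 := by
      rw [bdp_smul, bdp_add, even_mul_odd hce hy, odd_mul_even hce hy, add_zero, smul_zero]
    rw [superMul_odd_odd hx' hy, superMul_odd_odd hx hy'] at h
    simp only [Matrix.smul_mul, Matrix.mul_smul, smul_add, smul_sub, smul_smul,
      mul_sub, sub_mul, mul_add, add_mul, Matrix.mul_assoc,
      Matrix.single_mul_single_same, mul_one,
      Matrix.single_mul_single_of_ne (c := (1:F)) b e a hea 1] at h
    have he := Matrix.ext_iff.mpr h b b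
    simp only [Matrix.smul_apply, Matrix.add_apply, Matrix.sub_apply, Matrix.zero_apply,
      mul_std_apply, std_mul_apply, smul_eq_mul, Matrix.mul_zero, Matrix.zero_mul] at he
    simp only [if_pos rfl, if_neg hba, if_neg hbe', if_neg hab', if_neg heb, if_neg hea, if_true,
      mul_zero, sub_zero, add_zero, zero_add, zero_sub, sub_self, neg_zero] at he
    field_simp at he
    refine cancel_pow_two hchar (k := 5) ?_
    linear_combination 16 * he
  -- assemble: c is a scalar matrix
  obtain ⟨i0⟩ : Nonempty (Fin m) := ⟨⟨0, hm⟩⟩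
  obtain ⟨j0⟩ : Nonempty (Fin n) := ⟨⟨0, hn⟩⟩
  set α : F := c (Sum.inl i0) (Sum.inl i0) with hα
  have hscal : c = α • (1 : Matrix (Fin m ⊕ Fin n) (Fin m ⊕ Fin n) F) := by
    ext p q
    rw [Matrix.smul_apply]
    by_cases hpq : p = q
    · subst hpq
      rw [Matrix.one_apply_eq, smul_eq_mul, mul_one]
      rcases p with i | j
      · exact (hkey (Sum.inl i) (Sum.inr j0) (by simp)).trans
          (hkey (Sum.inr j0) (Sum.inl i0) (by simp))
      · exact hkey (Sum.inr j) (Sum.inl i0) (by simp)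
    · rw [Matrix.one_apply_ne hpq, smul_eq_mul, mul_zero]
      by_cases hside : p.isLeft = q.isLeft
      · have hqp : q ≠ p := fun h => hpq h.symm
        obtain ⟨b', hqb⟩ : ∃ b' : Fin m ⊕ Fin n, ¬ q.isLeft = b'.isLeft := by
          rcases q with i | j
          · exact ⟨Sum.inr j0, by simp⟩
          · exact ⟨Sum.inl i0, by simp⟩
        exact hdiag q p b' hqp hside.symm hqb
      · exact hoff p q hside
  refine ⟨α, fun x => ?_⟩
  rw [hT x, hscal]
  simp only [Matrix.smul_mul, Matrix.mul_smul, Matrix.one_mul, Matrix.mul_one]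
  rw [← two_smul F (α • x), smul_smul, one_div_mul_cancel hchar, one_smul]
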